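/- Let t ∈ [0,1], let τ : [0,1] → ℝ be a measurable function, and let F₁, F₂ : ℝ → [0,1] be nondecreasing functions. For i = 1, 2 set pᵢ := ∫₀ᵗ (1 − Fᵢ(τ(s))) ds, and set q := ∫₀ᵗ (1 − √(F₁(τ(s))·F₂(τ(s)))) ds. Then 1 − (1 − p₁)·(1 − p₂) ≤ 1 − (1 − q)², i.e., (1 − q)² ≤ (1 − p₁)·(1 − p₂). -/

import Mathlib

open MeasureTheory

private lemma aux_memL2 {t : ℝ} (g : ℝ → ℝ) (hg : Measurable g)
    (h0 : ∀ x, 0 ≤ g x) (h1 : ∀ x, g x ≤ 1) :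
    MemLp g (ENNReal.ofReal 2) (volume.restrict (Set.Ioc (0:ℝ) t)) := by
  have : IsFiniteMeasure (volume.restrict (Set.Ioc (0:ℝ) t)) := by
    constructor
    rw [Measure.restrict_apply_univ, Real.volume_Ioc]
    exact ENNReal.ofReal_lt_top
  refine MemLp.of_bound hg.aestronglyMeasurable 1 ?_
  filter_upwards with x
  rw [Real.norm_of_nonneg (h0 x)]
  exact h1 x

/-- **Lemma 2.3.** Symmetrizing two rewards while preserving the distribution of their maximum
increases the probability of stopping before any time `t`. -/
theorem stmt1
    (t : ℝ) (ht : t ∈ Set.Icc (0:ℝ) 1)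
    (τ : ℝ → ℝ) (hτ : Measurable τ)
    (F₁ F₂ : ℝ → ℝ) (hF₁mono : Monotone F₁) (hF₂mono : Monotone F₂)
    (hF₁ : ∀ x, F₁ x ∈ Set.Icc (0:ℝ) 1) (hF₂ : ∀ x, F₂ x ∈ Set.Icc (0:ℝ) 1)
    (p₁ p₂ q : ℝ)
    (hp₁ : p₁ = ∫ s in (0:ℝ)..t, (1 - F₁ (τ s)))
    (hp₂ : p₂ = ∫ s in (0:ℝ)..t, (1 - F₂ (τ s)))
    (hq : q = ∫ s in (0:ℝ)..t, (1 - Real.sqrt (F₁ (τ s) * F₂ (τ s)))) :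
    (1 - q) ^ 2 ≤ (1 - p₁) * (1 - p₂) := by
  obtain ⟨ht0, ht1⟩ := ht
  set μ := volume.restrict (Set.Ioc (0:ℝ) t) with hμ
  have hμfin : IsFiniteMeasure μ := by
    constructor
    rw [Measure.restrict_apply_univ, Real.volume_Ioc]
    exact ENNReal.ofReal_lt_top
  set g₁ : ℝ → ℝ := fun s => F₁ (τ s) with hg₁def
  set g₂ : ℝ → ℝ := fun s => F₂ (τ s) with hg₂def
  have hg₁m : Measurable g₁ := hF₁mono.measurable.comp hτ
  have hg₂m : Measurable g₂ := hF₂mono.measurable.comp hτ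
  have hg₁0 : ∀ x, 0 ≤ g₁ x := fun x => (hF₁ _).1
  have hg₁1 : ∀ x, g₁ x ≤ 1 := fun x => (hF₁ _).2
  have hg₂0 : ∀ x, 0 ≤ g₂ x := fun x => (hF₂ _).1
  have hg₂1 : ∀ x, g₂ x ≤ 1 := fun x => (hF₂ _).2
  -- integrability
  have hint : ∀ (g : ℝ → ℝ), Measurable g → (∀ x, 0 ≤ g x) → (∀ x, g x ≤ 1) →
      Integrable g μ := by
    intro g hg h0 h1
    have := aux_memL2 (t := t) g hg h0 h1
    refine Integrable.mono' (integrable_const 1) hg.aestronglyMeasurable ?_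
    filter_upwards with x
    rw [Real.norm_of_nonneg (h0 x)]
    exact h1 x
  have hi₁ : Integrable g₁ μ := hint g₁ hg₁m hg₁0 hg₁1
  have hi₂ : Integrable g₂ μ := hint g₂ hg₂m hg₂0 hg₂1
  have hsm : Measurable (fun s => Real.sqrt (g₁ s * g₂ s)) :=
    (hg₁m.mul hg₂m).sqrt
  have hs0 : ∀ x, 0 ≤ Real.sqrt (g₁ x * g₂ x) := fun x => Real.sqrt_nonneg _
  have hs1 : ∀ x, Real.sqrt (g₁ x * g₂ x) ≤ 1 := by
    intro x
    rw [show (1:ℝ) = Real.sqrt 1 by simp]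
    exact Real.sqrt_le_sqrt (mul_le_one₀ (hg₁1 x) (hg₂0 x) (hg₂1 x))
  have hiS : Integrable (fun s => Real.sqrt (g₁ s * g₂ s)) μ := hint _ hsm hs0 hs1
  set a := ∫ s, g₁ s ∂μ with ha
  set b := ∫ s, g₂ s ∂μ with hb
  set c := ∫ s, Real.sqrt (g₁ s * g₂ s) ∂μ with hc
  have hμt : ∫ s, (1:ℝ) ∂μ = t := by
    simp [hμ, Real.volume_Ioc, ENNReal.toReal_ofReal ht0, ht0]
  -- rewrite p₁, p₂, q
  have hp₁' : 1 - p₁ = (1 - t) + a := by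
    rw [hp₁, intervalIntegral.integral_of_le ht0, ← hμ,
      integral_sub (integrable_const 1) hi₁, hμt]
    ring
  have hp₂' : 1 - p₂ = (1 - t) + b := by
    rw [hp₂, intervalIntegral.integral_of_le ht0, ← hμ,
      integral_sub (integrable_const 1) hi₂, hμt]
    ring
  have hq' : 1 - q = (1 - t) + c := by
    rw [hq, intervalIntegral.integral_of_le ht0, ← hμ,
      integral_sub (integrable_const 1) hiS, hμt]
    ring
  -- Cauchy-Schwarz: c ≤ √a * √b
  have hcs : c ≤ Real.sqrt a * Real.sqrt b := by
    have h2 : (2:ℝ).HolderConjugate 2 := by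
      rw [Real.holderConjugate_iff]; norm_num
    have hm₁ := aux_memL2 (t := t) (fun x => Real.sqrt (g₁ x)) hg₁m.sqrt
      (fun x => Real.sqrt_nonneg _)
      (fun x => by
        rw [show (1:ℝ) = Real.sqrt 1 by simp]
        exact Real.sqrt_le_sqrt (hg₁1 x))
    have hm₂ := aux_memL2 (t := t) (fun x => Real.sqrt (g₂ x)) hg₂m.sqrt
      (fun x => Real.sqrt_nonneg _)
      (fun x => by
        rw [show (1:ℝ) = Real.sqrt 1 by simp]
        exact Real.sqrt_le_sqrt (hg₂1 x))
    have := integral_mul_le_Lp_mul_Lq_of_nonneg (μ := μ) h2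
      (f := fun x => Real.sqrt (g₁ x)) (g := fun x => Real.sqrt (g₂ x))
      (Filter.Eventually.of_forall fun x => Real.sqrt_nonneg _)
      (Filter.Eventually.of_forall fun x => Real.sqrt_nonneg _) hm₁ hm₂
    have hsq₁ : ∀ x : ℝ, Real.sqrt (g₁ x) ^ (2:ℝ) = g₁ x := fun x => by
      rw [Real.rpow_two, Real.sq_sqrt (hg₁0 x)]
    have hsq₂ : ∀ x : ℝ, Real.sqrt (g₂ x) ^ (2:ℝ) = g₂ x := fun x => by
      rw [Real.rpow_two, Real.sq_sqrt (hg₂0 x)]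
    simp only [hsq₁, hsq₂, ← Real.sqrt_mul (hg₁0 _)] at this
    calc c ≤ (∫ x, g₁ x ∂μ) ^ (1/(2:ℝ)) * (∫ x, g₂ x ∂μ) ^ (1/(2:ℝ)) := this
      _ = Real.sqrt a * Real.sqrt b := by
          rw [← ha, ← hb, Real.sqrt_eq_rpow, Real.sqrt_eq_rpow]
  have ha0 : 0 ≤ a := integral_nonneg hg₁0
  have hb0 : 0 ≤ b := integral_nonneg hg₂0
  have hc0 : 0 ≤ c := integral_nonneg hs0
  have hc2 : c ^ 2 ≤ a * b := by
    calc c ^ 2 ≤ (Real.sqrt a * Real.sqrt b) ^ 2 := by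
          apply pow_le_pow_left₀ hc0 hcs
      _ = a * b := by
          rw [mul_pow, Real.sq_sqrt ha0, Real.sq_sqrt hb0]
  -- AM-GM: 2c ≤ a + b
  have hamgm : 2 * c ≤ a + b := by
    have hpt : ∀ x : ℝ, Real.sqrt (g₁ x * g₂ x) ≤ (g₁ x + g₂ x) / 2 := by
      intro x
      have h := Real.sqrt_le_sqrt
        (show g₁ x * g₂ x ≤ ((g₁ x + g₂ x) / 2) ^ 2 by nlinarith [sq_nonneg (g₁ x - g₂ x)])
      rwa [Real.sqrt_sq (by have h1 := hg₁0 x; have h2 := hg₂0 x; linarith)] at h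
    have := integral_mono hiS ((hi₁.add hi₂).div_const 2) hpt
    simp only [Pi.add_apply] at this
    rw [← hc, integral_div, integral_add hi₁ hi₂, ← ha, ← hb] at this
    linarith
  have het : 0 ≤ 1 - t := by linarith
  rw [hp₁', hp₂', hq']
  nlinarith [hc2, hamgm, het, mul_nonneg het hc0]
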